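/- The group of the toroidal hypermap (3,3,3)_{(s,0)} is a subgroup of index 2 in the group of the toroidal map {6,3}_{(s,0)}; specifically, if K = ⟨τ0,τ1,τ2⟩ is the quotient of the Coxeter group [6,3] by the normal closure of (τ0τ1τ2)^{2s}, then G = ⟨τ0τ1τ0, τ1, τ2⟩ has index 2 in K. -/

import Mathlib

/-- Relations of the group of the toroidal map {6,3}_{(s,0)}: the Coxeter group [6,3]
(generators τ0, τ1, τ2 with τi² = (τ0τ1)⁶ = (τ1τ2)³ = (τ0τ2)² = 1) factored by the
normal closure of (τ0τ1τ2)^{2s}. -/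
def mapRels (s : ℕ) : Set (FreeGroup (Fin 3)) :=
  {r | ∃ i : Fin 3, r = FreeGroup.of i ^ 2} ∪
  {(FreeGroup.of 0 * FreeGroup.of 1) ^ 6, (FreeGroup.of 1 * FreeGroup.of 2) ^ 3,
   (FreeGroup.of 0 * FreeGroup.of 2) ^ 2,
   (FreeGroup.of 0 * FreeGroup.of 1 * FreeGroup.of 2) ^ (2 * s)}

/-- The group of the toroidal map {6,3}_{(s,0)}. -/
abbrev Map63 (s : ℕ) := PresentedGroup (mapRels s)

/-- The hypermap subgroup `⟨τ0τ1τ0, τ1, τ2⟩` has index 2 in the group of {6,3}_{(s,0)}. -/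
theorem stmt12 (s : ℕ) (hs : 2 ≤ s) :
    let τ : Fin 3 → Map63 s := fun i => PresentedGroup.of i
    (Subgroup.closure {τ 0 * τ 1 * τ 0, τ 1, τ 2} : Subgroup (Map63 s)).index = 2 := by
  intro τ
  set H : Subgroup (Map63 s) := Subgroup.closure {τ 0 * τ 1 * τ 0, τ 1, τ 2} with hH
  have hrel : ∀ r ∈ mapRels s, (QuotientGroup.mk r : Map63 s) = 1 := fun r hr =>
    (QuotientGroup.eq_one_iff r).2 (Subgroup.subset_normalClosure hr)
  -- basic relations
  have hτsq : ∀ i, τ i * τ i = 1 := by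
    intro i
    have h := hrel (FreeGroup.of i ^ 2) (Or.inl ⟨i, rfl⟩)
    rw [pow_two, QuotientGroup.mk_mul] at h
    exact h
  have hτ' : ∀ i (x : Map63 s), τ i * (τ i * x) = x := by
    intro i x; rw [← mul_assoc, hτsq, one_mul]
  have hτinv : ∀ i, (τ i)⁻¹ = τ i := fun i => inv_eq_of_mul_eq_one_right (hτsq i)
  have h02 : τ 0 * τ 2 * τ 0 = τ 2 := by
    have h := hrel ((FreeGroup.of 0 * FreeGroup.of 2) ^ 2)
      (Or.inr (Or.inr (Or.inr (Or.inl rfl))))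
    rw [pow_two, QuotientGroup.mk_mul, QuotientGroup.mk_mul] at h
    have h' : τ 0 * τ 2 * (τ 0 * τ 2) = 1 := h
    rw [← mul_assoc, mul_eq_one_iff_eq_inv, hτinv] at h'
    exact h' 
  -- generators of H
  have hg1 : τ 0 * τ 1 * τ 0 ∈ H := Subgroup.subset_closure (Or.inl rfl)
  have hg2 : τ 1 ∈ H := Subgroup.subset_closure (Or.inr (Or.inl rfl))
  have hg3 : τ 2 ∈ H := Subgroup.subset_closure (Or.inr (Or.inr rfl))
  -- conjugation by τ0 preserves H
  have hconj : ∀ x ∈ H, τ 0 * x * τ 0 ∈ H := by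
    intro x hx
    induction hx using Subgroup.closure_induction with
    | mem y hy =>
      rcases hy with rfl | rfl | rfl
      · have : τ 0 * (τ 0 * τ 1 * τ 0) * τ 0 = τ 1 := by
          simp only [mul_assoc, hτ', hτsq, mul_one]
        rw [this]; exact hg2
      · exact hg1
      · rw [h02]; exact hg3
    | one => rw [mul_one, hτsq]; exact Subgroup.one_mem H
    | mul y z hy hz ihy ihz =>
      have : τ 0 * (y * z) * τ 0 = (τ 0 * y * τ 0) * (τ 0 * z * τ 0) := by
        simp only [mul_assoc, hτ']
      rw [this]; exact Subgroup.mul_mem _ ihy ihz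
    | inv y hy ihy =>
      have : τ 0 * y⁻¹ * τ 0 = (τ 0 * y * τ 0)⁻¹ := by
        rw [mul_inv_rev, mul_inv_rev, hτinv, mul_assoc]
      rw [this]; exact Subgroup.inv_mem _ ihy
  -- coset cover
  have hcover : ∀ x : Map63 s, x ∈ H ∨ τ 0 * x ∈ H := by
    intro x
    refine QuotientGroup.induction_on x ?_
    intro w
    refine FreeGroup.induction_on w ?_ ?_ ?_ ?_
    · left; exact Subgroup.one_mem H
    · intro i
      show τ i ∈ H ∨ τ 0 * τ i ∈ H
      fin_cases i
      · right; show τ 0 * τ 0 ∈ H; rw [hτsq]; exact Subgroup.one_mem H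
      · left; exact hg2
      · left; exact hg3
    · intro i ih
      have hmk : (QuotientGroup.mk ((FreeGroup.of i : FreeGroup (Fin 3))⁻¹) : Map63 s) = τ i := by
        rw [QuotientGroup.mk_inv]; exact hτinv i
      show (τ i)⁻¹ ∈ H ∨ τ 0 * (τ i)⁻¹ ∈ H
      rw [hτinv]
      exact ih
    · intro y z ihy ihz
      rw [QuotientGroup.mk_mul]
      set a : Map63 s := QuotientGroup.mk y
      set b : Map63 s := QuotientGroup.mk z
      show a * b ∈ H ∨ τ 0 * (a * b) ∈ H
      rcases ihy with ha | ha <;> rcases ihz with hb | hb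
      · exact Or.inl (Subgroup.mul_mem _ ha hb)
      · right
        have : τ 0 * (a * b) = (τ 0 * a * τ 0) * (τ 0 * b) := by
          simp only [mul_assoc, hτ']
        rw [this]; exact Subgroup.mul_mem _ (hconj a ha) hb
      · right
        rw [← mul_assoc]; exact Subgroup.mul_mem _ ha hb
      · left
        have : a * b = (τ 0 * (τ 0 * a) * τ 0) * (τ 0 * b) := by
          simp only [mul_assoc, hτ']
        rw [this]; exact Subgroup.mul_mem _ (hconj _ ha) hb
  -- homomorphism onto Z/2 showing τ0 ∉ H
  have hone : ∀ x : Multiplicative (ZMod 2), x * x = 1 := by decide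
  set f : Fin 3 → Multiplicative (ZMod 2) := ![Multiplicative.ofAdd 1, 1, 1] with hf_def
  have hpow2 : ∀ (x : Multiplicative (ZMod 2)) (n : ℕ), x ^ (2 * n) = 1 := by
    intro x n; rw [pow_mul, pow_two, hone, one_pow]
  have hf : ∀ r ∈ mapRels s, FreeGroup.lift f r = 1 := by
    rintro r (⟨i, rfl⟩ | rfl | rfl | rfl | rfl)
    · rw [map_pow, FreeGroup.lift_apply_of, pow_two, hone]
    · have h6 : ∀ x : Multiplicative (ZMod 2), x ^ 6 = 1 := by decide
      rw [map_pow, h6]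
    · rw [map_pow, map_mul, FreeGroup.lift_apply_of, FreeGroup.lift_apply_of]
      show ((1 : Multiplicative (ZMod 2)) * 1) ^ 3 = 1
      rw [one_mul, one_pow]
    · rw [map_pow, pow_two, hone]
    · rw [map_pow, hpow2]
  set φ : Map63 s →* Multiplicative (ZMod 2) := PresentedGroup.toGroup hf with hφ
  have hφof : ∀ i, φ (τ i) = f i := fun i => PresentedGroup.toGroup.of hf
  have hτ0H : τ 0 ∉ H := by
    intro hmem
    have hle : H ≤ φ.ker := by
      rw [hH]
      apply Subgroup.closure_le _ |>.2
      rintro x (rfl | rfl | rfl) <;>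
        simp only [Set.mem_setOf_eq, SetLike.mem_coe, MonoidHom.mem_ker, map_mul, hφof]
      · decide
      · decide
      · decide
    have : φ (τ 0) = 1 := hle hmem
    rw [hφof] at this
    revert this; decide
  -- conclude
  rw [Subgroup.index_eq_two_iff]
  refine ⟨τ 0, fun b => ?_⟩
  by_cases hb : b ∈ H
  · refine Or.inr ⟨hb, fun hbτ => hτ0H ?_⟩
    have := Subgroup.mul_mem _ (Subgroup.inv_mem _ hb) hbτ
    rwa [← mul_assoc, inv_mul_cancel, one_mul] at this
  · refine Or.inl ⟨?_, hb⟩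
    rcases hcover b⁻¹ with h | h
    · exact absurd (by simpa using Subgroup.inv_mem _ h) hb
    · have := Subgroup.inv_mem _ h
      rwa [mul_inv_rev, inv_inv, hτinv] at this
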